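/- Let A, B, C be compact convex sets in ℝ² that pairwise intersect but have empty triple intersection. Then there exist points p* ∈ A ∩ B, q* ∈ B ∩ C, r* ∈ C ∩ A such that every compact convex set M intersecting all three pairwise intersections A∩B, B∩C, C∩A contains p*, q*, and r*. -/

import Mathlib

/-!
Auxiliary machinery for the Lid lemma, based on the signed-area (orientation)
determinant `sg` in the plane.
-/

namespace LidAux

/-- signed area / orientation determinant of a triple of points in the plane -/
def sg (a b c : ℝ × ℝ) : ℝ :=
  (b.1 - a.1) * (c.2 - a.2) - (b.2 - a.2) * (c.1 - a.1)

lemma sg_cyc (a b c : ℝ × ℝ) : sg b c a = sg a b c := by unfold sg; ring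

lemma sg_swap12 (a b c : ℝ × ℝ) : sg b a c = -sg a b c := by unfold sg; ring

lemma sg_swap23 (a b c : ℝ × ℝ) : sg a c b = -sg a b c := by unfold sg; ring

lemma sg_swap13 (a b c : ℝ × ℝ) : sg c b a = -sg a b c := by unfold sg; ring

lemma sg_aba (a b : ℝ × ℝ) : sg a b a = 0 := by unfold sg; ring

lemma sg_abb (a b : ℝ × ℝ) : sg a b b = 0 := by unfold sg; ring

lemma sg_comb (a b x y : ℝ × ℝ) {u v : ℝ} (huv : u + v = 1) :
    sg a b (u • x + v • y) = u * sg a b x + v * sg a b y := by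
  have hv : v = 1 - u := by linarith
  subst hv
  simp [sg, Prod.smul_fst, Prod.smul_snd, smul_eq_mul]
  ring

/-- if cross product vanishes and u ≠ 0, then v is a multiple of u -/
lemma exists_scale {u v : ℝ × ℝ} (hu : u ≠ 0) (h : u.1 * v.2 - u.2 * v.1 = 0) :
    ∃ t : ℝ, v = t • u := by
  rcases eq_or_ne u.1 0 with h1 | h1
  · have h2 : u.2 ≠ 0 := by
      intro h2; exact hu (Prod.ext h1 h2)
    refine ⟨v.2 / u.2, ?_⟩
    have hz : u.2 * v.1 = 0 := by rw [h1] at h; linarith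
    have hv1 : v.1 = v.2 / u.2 * u.1 := by
      rcases mul_eq_zero.mp hz with h' | h'
      · exact absurd h' h2
      · rw [h1, h']; ring
    exact Prod.ext (by simpa using hv1) (by rw [Prod.smul_snd, smul_eq_mul, div_mul_cancel₀ _ h2])
  · refine ⟨v.1 / u.1, ?_⟩
    have hv2 : v.2 = v.1 / u.1 * u.2 := by
      field_simp
      nlinarith [h]
    exact Prod.ext (by rw [Prod.smul_fst, smul_eq_mul, div_mul_cancel₀ _ h1]) (by simpa using hv2)

/-- decomposition of sg-degenerate triples: c on the line through a b -/
lemma collinear_decomp {a b c : ℝ × ℝ} (hab : a ≠ b) (h : sg a b c = 0) :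
    ∃ t : ℝ, c = (1 - t) • a + t • b := by
  have hu : b - a ≠ 0 := sub_ne_zero.mpr (Ne.symm hab)
  have h' : (b - a).1 * (c - a).2 - (b - a).2 * (c - a).1 = 0 := by
    simp only [Prod.fst_sub, Prod.snd_sub]
    unfold sg at h; linarith
  obtain ⟨t, ht⟩ := exists_scale hu h'
  refine ⟨t, ?_⟩
  have : c = a + t • (b - a) := by rw [← ht]; abel
  rw [this, smul_sub]
  module

/-- points of the three pairwise intersections are never collinear -/
lemma sg_ne {A B C : Set (ℝ × ℝ)}
    (hAcv : Convex ℝ A) (hBcv : Convex ℝ B) (hCcv : Convex ℝ C)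
    (htri : A ∩ B ∩ C = ∅) {p q r : ℝ × ℝ}
    (hp : p ∈ A ∩ B) (hq : q ∈ B ∩ C) (hr : r ∈ C ∩ A) : sg p q r ≠ 0 := by
  intro h0
  have hmem : ∀ z : ℝ × ℝ, z ∈ A → z ∈ B → z ∈ C → False := by
    intro z h1 h2 h3
    have : z ∈ A ∩ B ∩ C := ⟨⟨h1, h2⟩, h3⟩
    rw [htri] at this; exact this
  rcases eq_or_ne p q with hpq | hpq
  · exact hmem p hp.1 hp.2 (hpq ▸ hq.2)
  obtain ⟨t, ht⟩ := collinear_decomp hpq h0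
  rcases le_or_gt t 0 with h1 | h1
  · -- p between r and q : p ∈ C
    have h1t : (0:ℝ) < 1 - t := by linarith
    have key : (1 / (1 - t)) • r + (-t / (1 - t)) • q = p := by
      rw [ht]; match_scalars <;> field_simp <;> ring
    have : (1 / (1 - t)) • r + (-t / (1 - t)) • q ∈ C := by
      refine hCcv hr.1 hq.2 (by positivity) ?_ (by field_simp; try ring)
      have : (0:ℝ) ≤ -t := by linarith
      positivity
    rw [key] at this
    exact hmem p hp.1 hp.2 this
  rcases le_or_gt t 1 with h2 | h2
  · -- r between p and q : r ∈ B
    have : (1 - t) • p + t • q ∈ B := hBcv hp.2 hq.1 (by linarith) (by linarith) (by ring)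
    rw [← ht] at this
    exact hmem r hr.2 this hr.1
  · -- q between p and r : q ∈ A
    have ht0 : (0:ℝ) < t := by linarith
    have key : (1 / t) • r + ((t - 1) / t) • p = q := by
      rw [ht]; match_scalars <;> field_simp <;> ring
    have : (1 / t) • r + ((t - 1) / t) • p ∈ A := by
      refine hAcv hr.2 hp.1 (by positivity) ?_ (by field_simp; try ring)
      have : (0:ℝ) ≤ t - 1 := by linarith
      positivity
    rw [key] at this
    exact hmem q this hq.1 hq.2

/-- two segments with strictly alternating endpoints cross -/
lemma seg_cross {a b c d : ℝ × ℝ} (h1 : 0 < sg c d a) (h2 : sg c d b < 0)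
    (h3 : sg a b c < 0) (h4 : 0 < sg a b d) :
    ∃ m, m ∈ segment ℝ a b ∧ m ∈ segment ℝ c d := by
  set D : ℝ := sg c d a - sg c d b with hD
  have hDpos : 0 < D := by rw [hD]; linarith
  have hDne : D ≠ 0 := ne_of_gt hDpos
  have hD' : sg a b d - sg a b c = D := by rw [hD]; unfold sg; ring
  have hE : (sg a b d) • c + (-sg a b c) • d = (-sg c d b) • a + (sg c d a) • b := by
    refine Prod.ext ?_ ?_ <;>
      (simp only [Prod.fst_add, Prod.snd_add, Prod.smul_fst, Prod.smul_snd, smul_eq_mul];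
       unfold sg; ring)
  have hsm : ∀ (x : ℝ) (v : ℝ × ℝ), (x / D) • v = D⁻¹ • (x • v) := by
    intro x v; rw [div_eq_inv_mul, mul_smul]
  have heq : (sg a b d / D) • c + (-sg a b c / D) • d
      = (-sg c d b / D) • a + (sg c d a / D) • b := by
    rw [hsm, hsm, hsm, hsm, ← smul_add, ← smul_add, hE]
  refine ⟨(-sg c d b / D) • a + (sg c d a / D) • b,
    ⟨-sg c d b / D, sg c d a / D, div_nonneg (by linarith) hDpos.le,
      div_nonneg (by linarith) hDpos.le, ?_, rfl⟩,
    ⟨sg a b d / D, -sg a b c / D, div_nonneg (by linarith) hDpos.le,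
      div_nonneg (by linarith) hDpos.le, ?_, heq⟩⟩
  · rw [← add_div, show -sg c d b + sg c d a = D by rw [hD]; ring]
    exact div_self hDne
  · rw [← add_div, show sg a b d + -sg a b c = D by rw [← hD']; ring]
    exact div_self hDne

lemma convex_hpGe (a b : ℝ × ℝ) : Convex ℝ {x | 0 ≤ sg a b x} := by
  intro x hx y hy u v hu hv huv
  simp only [Set.mem_setOf_eq] at *
  rw [sg_comb a b x y huv]
  have := mul_nonneg hu hx
  have := mul_nonneg hv hy
  linarith

lemma convex_hpLe (a b : ℝ × ℝ) : Convex ℝ {x | sg a b x ≤ 0} := by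
  intro x hx y hy u v hu hv huv
  simp only [Set.mem_setOf_eq] at *
  rw [sg_comb a b x y huv]
  have := mul_nonpos_of_nonneg_of_nonpos hu hx
  have := mul_nonpos_of_nonneg_of_nonpos hv hy
  linarith

lemma closed_hpGe (a b : ℝ × ℝ) : IsClosed {x | 0 ≤ sg a b x} :=
  isClosed_le continuous_const (by unfold sg; fun_prop)

lemma closed_hpLe (a b : ℝ × ℝ) : IsClosed {x | sg a b x ≤ 0} :=
  isClosed_le (by unfold sg; fun_prop) continuous_const

/-- a convex set contains 3-term convex combinations -/
lemma conv3 {M : Set (ℝ × ℝ)} (hM : Convex ℝ M) {p q r : ℝ × ℝ}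
    (hp : p ∈ M) (hq : q ∈ M) (hr : r ∈ M) {a b c : ℝ}
    (ha : 0 ≤ a) (hb : 0 ≤ b) (hc : 0 ≤ c) (habc : a + b + c = 1) :
    a • p + b • q + c • r ∈ M := by
  rcases eq_or_lt_of_le (by linarith : (0:ℝ) ≤ a + b) with h | h
  · have ha0 : a = 0 := by linarith
    have hb0 : b = 0 := by linarith
    have hc1 : c = 1 := by linarith
    simpa [ha0, hb0, hc1] using hr
  · have hw : (a / (a + b)) • p + (b / (a + b)) • q ∈ M :=
      hM hp hq (by positivity) (by positivity) (by field_simp)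
    have := hM hw hr (by linarith : (0:ℝ) ≤ a + b) hc habc
    have key : (a + b) • ((a / (a + b)) • p + (b / (a + b)) • q) + c • r
        = a • p + b • q + c • r := by
      match_scalars <;> field_simp
    rwa [key] at this

lemma sg_seg0 {a b m : ℝ × ℝ} (hm : m ∈ segment ℝ a b) : sg a b m = 0 := by
  obtain ⟨u, v, hu, hv, huv, rfl⟩ := hm
  rw [sg_comb _ _ _ _ huv, sg_aba, sg_abb]; ring

lemma sg_seg {a b c d m : ℝ × ℝ} (hm : m ∈ segment ℝ c d) :
    ∃ u v : ℝ, 0 ≤ u ∧ 0 ≤ v ∧ u + v = 1 ∧ sg a b m = u * sg a b c + v * sg a b d := by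
  obtain ⟨u, v, hu, hv, huv, rfl⟩ := hm
  exact ⟨u, v, hu, hv, huv, sg_comb _ _ _ _ huv⟩

section Helpers
variable {A B C : Set (ℝ × ℝ)} (hAcv : Convex ℝ A) (hBcv : Convex ℝ B)
  (hor : ∀ p ∈ A ∩ B, ∀ q ∈ B ∩ C, ∀ r ∈ C ∩ A, 0 < sg p q r)

include hAcv hBcv hor in
lemma exists_HG {p1 q1 p2 r2 : ℝ × ℝ}
    (hp1 : p1 ∈ A ∩ B) (hq1 : q1 ∈ B ∩ C) (hp2 : p2 ∈ A ∩ B) (hr2 : r2 ∈ C ∩ A) :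
    ∃ x ∈ A ∩ B, 0 ≤ sg p1 q1 x ∧ sg p2 r2 x ≤ 0 := by
  by_cases ha : sg p2 r2 p1 ≤ 0
  · exact ⟨p1, hp1, le_of_eq (sg_aba p1 q1).symm, ha⟩
  by_cases hb : 0 ≤ sg p1 q1 p2
  · exact ⟨p2, hp2, hb, le_of_eq (sg_aba p2 r2)⟩
  push_neg at ha hb
  obtain ⟨m, hm1, hm2⟩ := seg_cross (a := p1) (b := q1) (c := p2) (d := r2)
    ha (by rw [sg_swap23 p2 q1 r2]; linarith [hor p2 hp2 q1 hq1 r2 hr2]) hb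
    (hor p1 hp1 q1 hq1 r2 hr2)
  exact ⟨m, ⟨hAcv.segment_subset hp2.1 hr2.2 hm2, hBcv.segment_subset hp1.2 hq1.1 hm1⟩,
    le_of_eq (sg_seg0 hm1).symm, le_of_eq (sg_seg0 hm2)⟩

include hAcv hBcv hor in
lemma exists_HH {p1 q1 p2 q2 r0 : ℝ × ℝ}
    (hp1 : p1 ∈ A ∩ B) (hq1 : q1 ∈ B ∩ C) (hp2 : p2 ∈ A ∩ B) (hq2 : q2 ∈ B ∩ C)
    (hr0 : r0 ∈ C ∩ A) :
    ∃ x ∈ A ∩ B, 0 ≤ sg p1 q1 x ∧ 0 ≤ sg p2 q2 x := by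
  by_cases ha : 0 ≤ sg p2 q2 p1
  · exact ⟨p1, hp1, le_of_eq (sg_aba p1 q1).symm, ha⟩
  by_cases hb : 0 ≤ sg p1 q1 p2
  · exact ⟨p2, hp2, hb, le_of_eq (sg_aba p2 q2).symm⟩
  push_neg at ha hb
  rcases lt_trichotomy (sg p1 r0 p2) 0 with h3 | h3 | h3
  · -- cross [p2, r0] with [q1, p1]
    obtain ⟨m, hm1, hm2⟩ := seg_cross (a := p2) (b := r0) (c := q1) (d := p1)
      (by rw [sg_swap12 p1 q1 p2]; linarith)
      (by rw [sg_swap12 p1 q1 r0]; linarith [hor p1 hp1 q1 hq1 r0 hr0])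
      (by rw [sg_swap23 p2 q1 r0]; linarith [hor p2 hp2 q1 hq1 r0 hr0])
      (by rw [sg_swap13 p1 r0 p2]; linarith)
    refine ⟨m, ⟨hAcv.segment_subset hp2.1 hr0.2 hm1, hBcv.segment_subset hq1.1 hp1.2 hm2⟩, ?_, ?_⟩
    · rw [sg_swap12 q1 p1 m, sg_seg0 hm2, neg_zero]
    · obtain ⟨u, v, hu, hv, huv, hval⟩ := sg_seg (a := p2) (b := q2) hm1
      rw [hval, sg_aba]
      nlinarith [hor p2 hp2 q2 hq2 r0 hr0]
  · -- degenerate: contradiction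
    exfalso
    have hne : p1 ≠ r0 := by
      intro h
      rw [h] at ha
      linarith [hor p2 hp2 q2 hq2 r0 hr0]
    obtain ⟨t, ht⟩ := collinear_decomp hne h3
    have e1 : (1 - t) * sg p2 q2 p1 + t * sg p2 q2 r0 = 0 := by
      rw [← sg_comb p2 q2 p1 r0 (u := 1 - t) (v := t) (by ring), ← ht, sg_aba]
    have hp2q2r0 := hor p2 hp2 q2 hq2 r0 hr0
    have ht0 : 0 < t := by nlinarith
    have ht1 : t < 1 := by nlinarith
    have e2 : sg p1 q1 p2 = (1 - t) * sg p1 q1 p1 + t * sg p1 q1 r0 := by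
      conv_lhs => rw [ht]
      exact sg_comb p1 q1 p1 r0 (u := 1 - t) (v := t) (by ring)
    rw [sg_aba] at e2
    nlinarith [hor p1 hp1 q1 hq1 r0 hr0]
  · -- cross [p1, r0] with [q2, p2]
    obtain ⟨m, hm1, hm2⟩ := seg_cross (a := p1) (b := r0) (c := q2) (d := p2)
      (by rw [sg_swap12 p2 q2 p1]; linarith)
      (by rw [sg_swap12 p2 q2 r0]; linarith [hor p2 hp2 q2 hq2 r0 hr0])
      (by rw [sg_swap23 p1 q2 r0]; linarith [hor p1 hp1 q2 hq2 r0 hr0]) h3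
    refine ⟨m, ⟨hAcv.segment_subset hp1.1 hr0.2 hm1, hBcv.segment_subset hq2.1 hp2.2 hm2⟩, ?_, ?_⟩
    · obtain ⟨u, v, hu, hv, huv, hval⟩ := sg_seg (a := p1) (b := q1) hm1
      rw [hval, sg_aba]
      nlinarith [hor p1 hp1 q1 hq1 r0 hr0]
    · rw [sg_swap12 q2 p2 m, sg_seg0 hm2, neg_zero]

include hAcv hBcv hor in
lemma exists_GG {p1 r1 p2 r2 q0 : ℝ × ℝ}
    (hp1 : p1 ∈ A ∩ B) (hr1 : r1 ∈ C ∩ A) (hp2 : p2 ∈ A ∩ B) (hr2 : r2 ∈ C ∩ A)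
    (hq0 : q0 ∈ B ∩ C) :
    ∃ x ∈ A ∩ B, sg p1 r1 x ≤ 0 ∧ sg p2 r2 x ≤ 0 := by
  by_cases ha : sg p2 r2 p1 ≤ 0
  · exact ⟨p1, hp1, le_of_eq (sg_aba p1 r1), ha⟩
  by_cases hb : sg p1 r1 p2 ≤ 0
  · exact ⟨p2, hp2, hb, le_of_eq (sg_aba p2 r2)⟩
  push_neg at ha hb
  rcases lt_trichotomy (sg p1 q0 p2) 0 with h3 | h3 | h3
  · -- cross [p1, q0] with [p2, r2]
    obtain ⟨m, hm1, hm2⟩ := seg_cross (a := p1) (b := q0) (c := p2) (d := r2)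
      ha (by rw [sg_swap23 p2 q0 r2]; linarith [hor p2 hp2 q0 hq0 r2 hr2]) h3
      (hor p1 hp1 q0 hq0 r2 hr2)
    refine ⟨m, ⟨hAcv.segment_subset hp2.1 hr2.2 hm2, hBcv.segment_subset hp1.2 hq0.1 hm1⟩,
      ?_, le_of_eq (sg_seg0 hm2)⟩
    obtain ⟨u, v, hu, hv, huv, hval⟩ := sg_seg (a := p1) (b := r1) hm1
    rw [hval, sg_aba]
    have h5 := sg_swap23 p1 q0 r1
    nlinarith [hor p1 hp1 q0 hq0 r1 hr1]
  · -- degenerate: contradiction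
    exfalso
    have hne : p1 ≠ q0 := by
      intro h
      rw [h] at ha
      have h5 := sg_swap23 p2 q0 r2
      linarith [hor p2 hp2 q0 hq0 r2 hr2]
    obtain ⟨t, ht⟩ := collinear_decomp hne h3
    have e1 : (1 - t) * sg p2 r2 p1 + t * sg p2 r2 q0 = 0 := by
      rw [← sg_comb p2 r2 p1 q0 (u := 1 - t) (v := t) (by ring), ← ht, sg_aba]
    have h5 := sg_swap23 p2 q0 r2
    have h1 := hor p2 hp2 q0 hq0 r2 hr2
    have ht0 : 0 < t := by nlinarith
    have ht1 : t < 1 := by nlinarith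
    have e2 : sg p1 r1 p2 = (1 - t) * sg p1 r1 p1 + t * sg p1 r1 q0 := by
      conv_lhs => rw [ht]
      exact sg_comb p1 r1 p1 q0 (u := 1 - t) (v := t) (by ring)
    rw [sg_aba] at e2
    have h6 := sg_swap23 p1 q0 r1
    nlinarith [hor p1 hp1 q0 hq0 r1 hr1]
  · -- cross [p2, q0] with [p1, r1]
    obtain ⟨m, hm1, hm2⟩ := seg_cross (a := p2) (b := q0) (c := p1) (d := r1)
      hb (by rw [sg_swap23 p1 q0 r1]; linarith [hor p1 hp1 q0 hq0 r1 hr1])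
      (by rw [sg_swap13 p1 q0 p2]; linarith) (hor p2 hp2 q0 hq0 r1 hr1)
    refine ⟨m, ⟨hAcv.segment_subset hp1.1 hr1.2 hm2, hBcv.segment_subset hp2.2 hq0.1 hm1⟩,
      le_of_eq (sg_seg0 hm2), ?_⟩
    obtain ⟨u, v, hu, hv, huv, hval⟩ := sg_seg (a := p2) (b := r2) hm1
    rw [hval, sg_aba]
    have h5 := sg_swap23 p2 q0 r2
    nlinarith [hor p2 hp2 q0 hq0 r2 hr2]

end Helpers
lemma finrank_plane : Module.finrank ℝ (ℝ × ℝ) = 2 := by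
  simp [Module.finrank_prod]

lemma lid_core {A B C : Set (ℝ × ℝ)}
    (hAcp : IsCompact A) (hBcp : IsCompact B)
    (hAcv : Convex ℝ A) (hBcv : Convex ℝ B)
    (hPne : (A ∩ B).Nonempty) (hQne : (B ∩ C).Nonempty) (hRne : (C ∩ A).Nonempty)
    (hor : ∀ p ∈ A ∩ B, ∀ q ∈ B ∩ C, ∀ r ∈ C ∩ A, 0 < sg p q r) :
    ∃ x ∈ A ∩ B, (∀ p ∈ A ∩ B, ∀ q ∈ B ∩ C, 0 ≤ sg p q x) ∧
      (∀ p ∈ A ∩ B, ∀ r ∈ C ∩ A, sg p r x ≤ 0) := by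
  classical
  obtain ⟨q0, hq0⟩ := hQne
  obtain ⟨r0, hr0⟩ := hRne
  set ι : Type := {z : (ℝ × ℝ) × (ℝ × ℝ) // z.1 ∈ A ∩ B ∧ z.2 ∈ B ∩ C} ⊕
      {z : (ℝ × ℝ) × (ℝ × ℝ) // z.1 ∈ A ∩ B ∧ z.2 ∈ C ∩ A} with hι
  set t : ι → Set (ℝ × ℝ) := Sum.elim (fun z => {x | 0 ≤ sg z.1.1 z.1.2 x})
      (fun z => {x | sg z.1.1 z.1.2 x ≤ 0}) with htdef
  -- q's belong to all G-halfplanes, r's to all H-halfplanes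
  have memG : ∀ (z : {z : (ℝ × ℝ) × (ℝ × ℝ) // z.1 ∈ A ∩ B ∧ z.2 ∈ C ∩ A})
      (w : ℝ × ℝ), w ∈ B ∩ C → w ∈ t (Sum.inr z) := by
    intro z w hw
    have h1 := hor z.1.1 z.2.1 w hw z.1.2 z.2.2
    have h2 := sg_swap23 z.1.1 w z.1.2
    show sg z.1.1 z.1.2 w ≤ 0
    linarith
  have memH : ∀ (z : {z : (ℝ × ℝ) × (ℝ × ℝ) // z.1 ∈ A ∩ B ∧ z.2 ∈ B ∩ C})
      (w : ℝ × ℝ), w ∈ C ∩ A → w ∈ t (Sum.inl z) := by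
    intro z w hw
    exact le_of_lt (hor z.1.1 z.2.1 z.1.2 z.2.2 w hw)
  -- any two halfplanes meet inside A ∩ B
  have LP : ∀ i j : ι, ∃ x, x ∈ A ∩ B ∧ x ∈ t i ∧ x ∈ t j := by
    rintro (z1 | z1) (z2 | z2)
    · obtain ⟨x, hx, h1, h2⟩ := exists_HH hAcv hBcv hor z1.2.1 z1.2.2 z2.2.1 z2.2.2 hr0
      exact ⟨x, hx, h1, h2⟩
    · obtain ⟨x, hx, h1, h2⟩ := exists_HG hAcv hBcv hor z1.2.1 z1.2.2 z2.2.1 z2.2.2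
      exact ⟨x, hx, h1, h2⟩
    · obtain ⟨x, hx, h1, h2⟩ := exists_HG hAcv hBcv hor z2.2.1 z2.2.2 z1.2.1 z1.2.2
      exact ⟨x, hx, h2, h1⟩
    · obtain ⟨x, hx, h1, h2⟩ := exists_GG hAcv hBcv hor z1.2.1 z1.2.2 z2.2.1 z2.2.2 hq0
      exact ⟨x, hx, h1, h2⟩
  -- any three halfplanes intersect
  have LT : ∀ i j k : ι, ∃ x, x ∈ t i ∧ x ∈ t j ∧ x ∈ t k := by
    rintro (z1 | z1) (z2 | z2) (z3 | z3)
    · exact ⟨r0, memH z1 r0 hr0, memH z2 r0 hr0, memH z3 r0 hr0⟩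
    · exact ⟨z3.1.2, memH z1 _ z3.2.2, memH z2 _ z3.2.2,
        le_of_eq (sg_abb z3.1.1 z3.1.2)⟩
    · exact ⟨z2.1.2, memH z1 _ z2.2.2, le_of_eq (sg_abb z2.1.1 z2.1.2),
        memH z3 _ z2.2.2⟩
    · exact ⟨z1.1.2, le_of_eq (sg_abb z1.1.1 z1.1.2).symm, memG z2 _ z1.2.2,
        memG z3 _ z1.2.2⟩
    · exact ⟨z1.1.2, le_of_eq (sg_abb z1.1.1 z1.1.2), memH z2 _ z1.2.2,
        memH z3 _ z1.2.2⟩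
    · exact ⟨z2.1.2, memG z1 _ z2.2.2, le_of_eq (sg_abb z2.1.1 z2.1.2).symm,
        memG z3 _ z2.2.2⟩
    · exact ⟨z3.1.2, memG z1 _ z3.2.2, memG z2 _ z3.2.2,
        le_of_eq (sg_abb z3.1.1 z3.1.2).symm⟩
    · exact ⟨q0, memG z1 q0 hq0, memG z2 q0 hq0, memG z3 q0 hq0⟩
  -- extended family including A ∩ B itself; all triples intersect
  set E : Option ι → Set (ℝ × ℝ) := fun o => o.elim (A ∩ B) t with hEdef
  obtain ⟨p0, hp0⟩ := hPne
  have tripl : ∀ i j k : Option ι, (E i ∩ E j ∩ E k).Nonempty := by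
    rintro (_ | i) (_ | j) (_ | k)
    · exact ⟨p0, ⟨hp0, hp0⟩, hp0⟩
    · obtain ⟨x, hx, h1, _⟩ := LP k k
      exact ⟨x, ⟨hx, hx⟩, h1⟩
    · obtain ⟨x, hx, h1, _⟩ := LP j j
      exact ⟨x, ⟨hx, h1⟩, hx⟩
    · obtain ⟨x, hx, h1, h2⟩ := LP j k
      exact ⟨x, ⟨hx, h1⟩, h2⟩
    · obtain ⟨x, hx, h1, _⟩ := LP i i
      exact ⟨x, ⟨h1, hx⟩, hx⟩
    · obtain ⟨x, hx, h1, h2⟩ := LP i k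
      exact ⟨x, ⟨h1, hx⟩, h2⟩
    · obtain ⟨x, hx, h1, h2⟩ := LP i j
      exact ⟨x, ⟨h1, h2⟩, hx⟩
    · obtain ⟨x, h1, h2, h3⟩ := LT i j k
      exact ⟨x, ⟨h1, h2⟩, h3⟩
  have hEcv : ∀ o : Option ι, Convex ℝ (E o) := by
    rintro (_ | (z | z))
    · exact hAcv.inter hBcv
    · exact convex_hpGe z.1.1 z.1.2
    · exact convex_hpLe z.1.1 z.1.2
  -- finite intersections are nonempty, via Helly's theorem
  have hfin : ∀ u : Finset ι, (A ∩ B ∩ ⋂ i ∈ u, t i).Nonempty := by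
    intro u
    have main : (⋂ o ∈ insert (none : Option ι) (u.image some), E o).Nonempty := by
      apply Convex.helly_theorem' (𝕜 := ℝ)
      · exact fun o _ => hEcv o
      · intro I _ hIcard
        rw [finrank_plane] at hIcard
        rcases I.eq_empty_or_nonempty with hI | hI
        · subst hI; simp
        · rcases (show I.card = 1 ∨ I.card = 2 ∨ I.card = 3 from by
            have := Finset.card_pos.mpr hI; omega) with h | h | h
          · obtain ⟨i, rfl⟩ := Finset.card_eq_one.mp h
            obtain ⟨x, hx⟩ := tripl i i i
            exact ⟨x, by simpa using hx.2⟩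
          · obtain ⟨i, j, hij, rfl⟩ := Finset.card_eq_two.mp h
            obtain ⟨x, hx⟩ := tripl i j j
            refine ⟨x, ?_⟩
            simp only [Finset.set_biInter_insert, Finset.set_biInter_singleton]
            exact ⟨hx.1.1, hx.1.2⟩
          · obtain ⟨i, j, k, _, _, _, rfl⟩ := Finset.card_eq_three.mp h
            obtain ⟨x, hx⟩ := tripl i j k
            refine ⟨x, ?_⟩
            simp only [Finset.set_biInter_insert, Finset.set_biInter_singleton]
            exact ⟨hx.1.1, hx.1.2, hx.2⟩
    obtain ⟨x, hx⟩ := main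
    have hx' := Set.mem_iInter₂.mp hx
    refine ⟨x, hx' none (Finset.mem_insert_self _ _), ?_⟩
    apply Set.mem_biInter
    intro i hi
    exact hx' (some i) (Finset.mem_insert_of_mem (Finset.mem_image_of_mem some hi))
  -- compactness: full intersection nonempty
  have hPcp : IsCompact (A ∩ B) := hAcp.inter_right hBcp.isClosed
  have hclosed : ∀ i : ι, IsClosed (t i) := by
    rintro (z | z)
    · exact closed_hpGe z.1.1 z.1.2
    · exact closed_hpLe z.1.1 z.1.2
  have hfin' : ∀ u : Finset ι, (A ∩ B ∩ ⋂ i ∈ u, t i).Nonempty := hfin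
  obtain ⟨x, hxP, hxT⟩ := hPcp.inter_iInter_nonempty t hclosed hfin'
  have hxT' := Set.mem_iInter.mp hxT
  refine ⟨x, hxP, ?_, ?_⟩
  · intro p hp q hq
    exact hxT' (Sum.inl ⟨(p, q), hp, hq⟩)
  · intro p hp r hr
    exact hxT' (Sum.inr ⟨(p, r), hp, hr⟩)

/-- barycentric representation of x inside triangle pqr -/
lemma bary {p q r x : ℝ × ℝ} (hs : 0 < sg p q r) (h1 : 0 ≤ sg x q r)
    (h2 : 0 ≤ sg p q x) (h3 : sg p r x ≤ 0) :
    ∃ a b c : ℝ, 0 ≤ a ∧ 0 ≤ b ∧ 0 ≤ c ∧ a + b + c = 1 ∧ a • p + b • q + c • r = x := by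
  have hsne : sg p q r ≠ 0 := ne_of_gt hs
  have hb' : 0 ≤ sg p x r := by rw [show sg p x r = -sg p r x from sg_swap23 p r x]; linarith
  refine ⟨sg x q r / sg p q r, sg p x r / sg p q r, sg p q x / sg p q r,
    div_nonneg h1 hs.le, div_nonneg hb' hs.le, div_nonneg h2 hs.le, ?_, ?_⟩
  · rw [← add_div, ← add_div,
      show sg x q r + sg p x r + sg p q x = sg p q r from by unfold sg; ring]
    exact div_self hsne
  · have hW : sg x q r • p + sg p x r • q + sg p q x • r = sg p q r • x := by
      refine Prod.ext ?_ ?_ <;>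
        (simp only [Prod.fst_add, Prod.snd_add, Prod.smul_fst, Prod.smul_snd, smul_eq_mul];
         unfold sg; ring)
    have hsm : ∀ (y : ℝ) (v : ℝ × ℝ), (y / sg p q r) • v = (sg p q r)⁻¹ • (y • v) := by
      intro y v; rw [div_eq_inv_mul, mul_smul]
    rw [hsm, hsm, hsm, ← smul_add, ← smul_add, hW, inv_smul_smul₀ hsne]
/-- the positively-oriented case of the lid lemma -/
lemma lid_pos (A B C : Set (ℝ × ℝ))
    (hAcp : IsCompact A) (hBcp : IsCompact B) (hCcp : IsCompact C)
    (hAcv : Convex ℝ A) (hBcv : Convex ℝ B) (hCcv : Convex ℝ C)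
    (hAB : (A ∩ B).Nonempty) (hBC : (B ∩ C).Nonempty) (hCA : (C ∩ A).Nonempty)
    (hor : ∀ p ∈ A ∩ B, ∀ q ∈ B ∩ C, ∀ r ∈ C ∩ A, 0 < sg p q r) :
    ∃ p q r : ℝ × ℝ, p ∈ A ∩ B ∧ q ∈ B ∩ C ∧ r ∈ C ∩ A ∧
      ∀ M : Set (ℝ × ℝ), IsCompact M → Convex ℝ M →
        (M ∩ (A ∩ B)).Nonempty → (M ∩ (B ∩ C)).Nonempty → (M ∩ (C ∩ A)).Nonempty →
        p ∈ M ∧ q ∈ M ∧ r ∈ M := by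
  have hor2 : ∀ p ∈ B ∩ C, ∀ q ∈ C ∩ A, ∀ r ∈ A ∩ B, 0 < sg p q r := by
    intro p hp q hq r hr
    rw [sg_cyc r p q]
    exact hor r hr p hp q hq
  have hor3 : ∀ p ∈ C ∩ A, ∀ q ∈ A ∩ B, ∀ r ∈ B ∩ C, 0 < sg p q r := by
    intro p hp q hq r hr
    rw [sg_cyc r p q]
    exact hor2 r hr p hp q hq
  obtain ⟨x1, hx1, H1, G1⟩ := lid_core hAcp hBcp hAcv hBcv hAB hBC hCA hor
  obtain ⟨x2, hx2, H2, G2⟩ := lid_core hBcp hCcp hBcv hCcv hBC hCA hAB hor2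
  obtain ⟨x3, hx3, H3, G3⟩ := lid_core hCcp hAcp hCcv hAcv hCA hAB hBC hor3
  refine ⟨x1, x2, x3, hx1, hx2, hx3, ?_⟩
  intro M hMcp hMcv hM1 hM2 hM3
  obtain ⟨p', hp'M, hp'⟩ := hM1
  obtain ⟨q', hq'M, hq'⟩ := hM2
  obtain ⟨r', hr'M, hr'⟩ := hM3
  refine ⟨?_, ?_, ?_⟩
  · obtain ⟨a, b, c, ha, hb, hc, habc, heq⟩ := bary (hor p' hp' q' hq' r' hr')
      (le_of_lt (hor x1 hx1 q' hq' r' hr')) (H1 p' hp' q' hq') (G1 p' hp' r' hr')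
    rw [← heq]
    exact conv3 hMcv hp'M hq'M hr'M ha hb hc habc
  · obtain ⟨a, b, c, ha, hb, hc, habc, heq⟩ := bary (hor2 q' hq' r' hr' p' hp')
      (le_of_lt (hor2 x2 hx2 r' hr' p' hp')) (H2 q' hq' r' hr') (G2 q' hq' p' hp')
    rw [← heq]
    exact conv3 hMcv hq'M hr'M hp'M ha hb hc habc
  · obtain ⟨a, b, c, ha, hb, hc, habc, heq⟩ := bary (hor3 r' hr' p' hp' q' hq')
      (le_of_lt (hor3 x3 hx3 p' hp' q' hq')) (H3 r' hr' p' hp') (G3 r' hr' q' hq')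
    rw [← heq]
    exact conv3 hMcv hr'M hp'M hq'M ha hb hc habc

/-- coordinate swap (orientation-reversing linear involution) -/
def rf (v : ℝ × ℝ) : ℝ × ℝ := (v.2, v.1)

lemma rf_inj : Function.Injective rf := by
  intro a b h
  unfold rf at h
  exact Prod.ext (congrArg Prod.snd h) (congrArg Prod.fst h)

lemma rf_lin : IsLinearMap ℝ rf := ⟨fun x y => rfl, fun c x => rfl⟩

lemma rf_cont : Continuous rf := continuous_snd.prodMk continuous_fst

lemma sg_rf (a b c : ℝ × ℝ) : sg (rf a) (rf b) (rf c) = -sg a b c := by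
  unfold sg rf; ring


end LidAux

open LidAux in
/-- The Lid lemma: if compact convex sets `A, B, C ⊆ ℝ²` pairwise intersect but
have empty triple intersection, then there are points `p* ∈ A ∩ B`, `q* ∈ B ∩ C`,
`r* ∈ C ∩ A` contained in every compact convex lid `M`. -/
theorem lid_lemma (A B C : Set (ℝ × ℝ))
    (hAcp : IsCompact A) (hBcp : IsCompact B) (hCcp : IsCompact C)
    (hAcv : Convex ℝ A) (hBcv : Convex ℝ B) (hCcv : Convex ℝ C)
    (hAB : (A ∩ B).Nonempty) (hBC : (B ∩ C).Nonempty) (hCA : (C ∩ A).Nonempty)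
    (htri : A ∩ B ∩ C = ∅) :
    ∃ p q r : ℝ × ℝ, p ∈ A ∩ B ∧ q ∈ B ∩ C ∧ r ∈ C ∩ A ∧
      ∀ M : Set (ℝ × ℝ), IsCompact M → Convex ℝ M →
        (M ∩ (A ∩ B)).Nonempty → (M ∩ (B ∩ C)).Nonempty → (M ∩ (C ∩ A)).Nonempty →
        p ∈ M ∧ q ∈ M ∧ r ∈ M := by
  classical
  -- the orientation of triples in (A∩B) × (B∩C) × (C∩A) is constant
  set S : Set ((ℝ × ℝ) × (ℝ × ℝ) × (ℝ × ℝ)) := (A ∩ B) ×ˢ ((B ∩ C) ×ˢ (C ∩ A)) with hS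
  have hScv : Convex ℝ S := (hAcv.inter hBcv).prod ((hBcv.inter hCcv).prod (hCcv.inter hAcv))
  have hf : ContinuousOn (fun w : (ℝ × ℝ) × (ℝ × ℝ) × (ℝ × ℝ) => sg w.1 w.2.1 w.2.2) S := by
    apply Continuous.continuousOn
    unfold sg
    fun_prop
  have hne : ∀ w ∈ S, sg w.1 w.2.1 w.2.2 ≠ 0 := by
    rintro ⟨p, q, r⟩ hw
    simp only [hS, Set.mem_prod] at hw
    exact sg_ne hAcv hBcv hCcv htri hw.1 hw.2.1 hw.2.2
  have hdico : (∀ p ∈ A ∩ B, ∀ q ∈ B ∩ C, ∀ r ∈ C ∩ A, 0 < sg p q r) ∨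
      (∀ p ∈ A ∩ B, ∀ q ∈ B ∩ C, ∀ r ∈ C ∩ A, sg p q r < 0) := by
    by_contra hcon
    push_neg at hcon
    obtain ⟨⟨p1, hp1, q1, hq1, r1, hr1, h1⟩, ⟨p2, hp2, q2, hq2, r2, hr2, h2⟩⟩ := hcon
    have hw1 : ((p1, q1, r1) : (ℝ × ℝ) × (ℝ × ℝ) × (ℝ × ℝ)) ∈ S := by
      simp only [hS, Set.mem_prod]; exact ⟨hp1, hq1, hr1⟩
    have hw2 : ((p2, q2, r2) : (ℝ × ℝ) × (ℝ × ℝ) × (ℝ × ℝ)) ∈ S := by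
      simp only [hS, Set.mem_prod]; exact ⟨hp2, hq2, hr2⟩
    obtain ⟨w, hwS, hw0⟩ := hScv.isPreconnected.intermediate_value₂ hw1 hw2 hf
      continuousOn_const (by simpa using h1) (by simpa using h2)
    exact hne w hwS hw0
  rcases hdico with hor | hneg
  · exact lid_pos A B C hAcp hBcp hCcp hAcv hBcv hCcv hAB hBC hCA hor
  · -- reflect the plane to reverse orientation
    set A' := rf '' A with hA'
    set B' := rf '' B with hB'
    set C' := rf '' C with hC'
    have hIAB : rf '' (A ∩ B) = A' ∩ B' := Set.image_inter rf_inj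
    have hIBC : rf '' (B ∩ C) = B' ∩ C' := Set.image_inter rf_inj
    have hICA : rf '' (C ∩ A) = C' ∩ A' := Set.image_inter rf_inj
    have hor' : ∀ p ∈ A' ∩ B', ∀ q ∈ B' ∩ C', ∀ r ∈ C' ∩ A', 0 < sg p q r := by
      intro p hp q hq r hr
      rw [← hIAB] at hp; rw [← hIBC] at hq; rw [← hICA] at hr
      obtain ⟨p0, hp0, rfl⟩ := hp
      obtain ⟨q0, hq0, rfl⟩ := hq
      obtain ⟨r0, hr0, rfl⟩ := hr
      rw [sg_rf]
      have := hneg p0 hp0 q0 hq0 r0 hr0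
      linarith
    obtain ⟨p', q', r', hp', hq', hr', hkey⟩ := lid_pos A' B' C'
      (hAcp.image rf_cont) (hBcp.image rf_cont) (hCcp.image rf_cont)
      (hAcv.is_linear_image rf_lin) (hBcv.is_linear_image rf_lin) (hCcv.is_linear_image rf_lin)
      (by rw [← hIAB]; exact hAB.image rf) (by rw [← hIBC]; exact hBC.image rf)
      (by rw [← hICA]; exact hCA.image rf) hor'
    rw [← hIAB] at hp'; rw [← hIBC] at hq'; rw [← hICA] at hr'
    obtain ⟨p, hp, rfl⟩ := hp'
    obtain ⟨q, hq, rfl⟩ := hq'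
    obtain ⟨r, hr, rfl⟩ := hr'
    refine ⟨p, q, r, hp, hq, hr, ?_⟩
    intro M hMcp hMcv hM1 hM2 hM3
    have himg : ∀ {X : Set (ℝ × ℝ)}, (M ∩ X).Nonempty →
        (rf '' M ∩ rf '' X).Nonempty := by
      intro X hst
      rw [← Set.image_inter rf_inj]
      exact hst.image rf
    obtain ⟨h1, h2, h3⟩ := hkey (rf '' M) (hMcp.image rf_cont) (hMcv.is_linear_image rf_lin)
      (by rw [hA', hB', ← hIAB]; exact himg hM1) (by rw [hB', hC', ← hIBC]; exact himg hM2)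
      (by rw [hC', hA', ← hICA]; exact himg hM3)
    obtain ⟨pm, hpm, hpe⟩ := h1
    obtain ⟨qm, hqm, hqe⟩ := h2
    obtain ⟨rm, hrm, hre⟩ := h3
    rw [rf_inj hpe] at hpm
    rw [rf_inj hqe] at hqm
    rw [rf_inj hre] at hrm
    exact ⟨hpm, hqm, hrm⟩
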